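/- Let k ≥ 3 and 0 < ε ≤ (k-1)/2 be integers and let G be a vgr(n, k, 5, k(k-1)²/2 − ε)-graph. Then for every vertex u of G, |E(N_2(u), V(G)∖(N(u) ∪ N_2(u)))| = 2ε. -/

import Mathlib

open SimpleGraph

/-- The set of vertices at distance exactly 2 from `v` in `G` (denoted `N₂(v)`). -/
def distTwoSet {V : Type*} (G : SimpleGraph V) (v : V) : Set V := {w | G.dist v w = 2}

/-- The set of edges of `G` with one endpoint in `A` and the other endpoint in `B`,
denoted `E(A, B)`. -/
def edgesBetween {V : Type*} (G : SimpleGraph V) (A B : Set V) : Set (Sym2 V) :=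
  {e | e ∈ G.edgeSet ∧ ∃ a ∈ A, ∃ b ∈ B, e = s(a, b)}

/-- Twice the number of cycles of length `g` through the vertex `v`: we count the closed
walks based at `v` that are cycles of length `g`; every (undirected) cycle of length `g`
containing `v` corresponds to exactly two such walks (its two orientations). -/
noncomputable def doubleCycleCountAt {V : Type*} (G : SimpleGraph V) (g : ℕ) (v : V) : ℕ :=
  {p : G.Walk v v | p.IsCycle ∧ p.length = g}.ncard

/-- `G` is a `vgr(n, k, g, lam)`-graph: a `k`-regular graph of girth `g` on `n` vertices
in which every vertex lies on exactly `lam` cycles of length `g` (equivalently, the number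
of closed cycle-walks of length `g` based at each vertex is `2 * lam`). -/
def IsVGR {V : Type*} [Fintype V] (G : SimpleGraph V) [DecidableRel G.Adj]
    (n k g lam : ℕ) : Prop :=
  Fintype.card V = n ∧ (∀ v : V, G.degree v = k) ∧ G.girth = (g : ℕ∞) ∧
    ∀ v : V, doubleCycleCountAt G g v = 2 * lam

namespace VGRaux

variable {V : Type*} {G : SimpleGraph V}

lemma cycle_len_ge (hg : 5 ≤ G.egirth) {a : V} (p : G.Walk a a) (hp : p.IsCycle) :
    5 ≤ p.length := by
  have := le_egirth.mp hg a p hp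
  exact_mod_cast this

lemma no_triangle (hg : 5 ≤ G.egirth) {a b c : V} (hab : G.Adj a b) (hbc : G.Adj b c)
    (hca : G.Adj c a) : False := by
  have hcyc : (Walk.cons hab (Walk.cons hbc (Walk.cons hca Walk.nil))).IsCycle := by
    rw [Walk.cons_isCycle_iff]
    constructor
    · rw [Walk.isPath_def]
      simp [hab.ne, hbc.ne, hca.ne, hab.ne', hbc.ne', hca.ne']
    · simp only [Walk.edges_cons, Walk.edges_nil, List.mem_cons, List.not_mem_nil, or_false]
      push_neg
      constructor <;>
        simp [Ne, Sym2.eq_iff, hab.ne, hbc.ne, hca.ne, hab.ne', hbc.ne', hca.ne']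
  have := cycle_len_ge hg _ hcyc
  simp at this

lemma no_square (hg : 5 ≤ G.egirth) {a b c d : V} (hac : a ≠ c) (hbd : b ≠ d)
    (hab : G.Adj a b) (hbc : G.Adj b c) (hcd : G.Adj c d) (hda : G.Adj d a) : False := by
  have hcyc : (Walk.cons hab (Walk.cons hbc (Walk.cons hcd (Walk.cons hda Walk.nil)))).IsCycle := by
    rw [Walk.cons_isCycle_iff]
    constructor
    · rw [Walk.isPath_def]
      simp [hab.ne, hbc.ne, hcd.ne, hda.ne, hab.ne', hbc.ne', hcd.ne', hda.ne', hac, hbd,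
        hac.symm, hbd.symm]
    · simp only [Walk.edges_cons, Walk.edges_nil, List.mem_cons, List.not_mem_nil, or_false]
      push_neg
      refine ⟨?_, ?_, ?_⟩ <;>
        simp [Ne, Sym2.eq_iff, hab.ne, hbc.ne, hcd.ne, hda.ne, hab.ne', hbc.ne', hcd.ne',
          hda.ne', hac, hbd, hac.symm, hbd.symm]
  have := cycle_len_ge hg _ hcyc
  simp at this

lemma walk_decomp2 {u w : V} (p : G.Walk u w) (hlen : p.length = 2) :
    ∃ a, G.Adj u a ∧ G.Adj a w := by
  cases p with
  | nil => simp at hlen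
  | cons h1 q =>
    cases q with
    | nil => simp at hlen
    | cons h2 r =>
      have : r.length = 0 := by simp only [Walk.length_cons] at hlen; omega
      have := Walk.eq_of_length_eq_zero this
      subst this
      exact ⟨_, h1, h2⟩

lemma mem_B_iff {u w : V} :
    G.dist u w = 2 ↔ (w ≠ u ∧ ¬ G.Adj u w ∧ ∃ a, G.Adj u a ∧ G.Adj a w) := by
  constructor
  · intro h
    have hne : u ≠ w := by
      intro he; subst he; simp [SimpleGraph.dist_self] at h
    have hreach : G.Reachable u w := Reachable.of_dist_ne_zero (by omega)
    obtain ⟨p, hp⟩ := hreach.exists_walk_length_eq_dist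
    rw [h] at hp
    obtain ⟨a, h1, h2⟩ := walk_decomp2 p hp
    refine ⟨hne.symm, fun hadj => ?_, a, h1, h2⟩
    have := SimpleGraph.dist_eq_one_iff_adj.mpr hadj
    omega
  · rintro ⟨hne, hnadj, a, h1, h2⟩
    have hle : G.dist u w ≤ 2 := by
      have := SimpleGraph.dist_le (Walk.cons h1 (Walk.cons h2 Walk.nil))
      simpa using this
    have h0 : G.dist u w ≠ 0 := by
      rw [SimpleGraph.dist_ne_zero_iff_ne_and_reachable]
      exact ⟨hne.symm, ⟨Walk.cons h1 (Walk.cons h2 Walk.nil)⟩⟩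
    have h1' : G.dist u w ≠ 1 := fun h => hnadj (SimpleGraph.dist_eq_one_iff_adj.mp h)
    omega

lemma unique_nbr (hg : 5 ≤ G.egirth) {u w : V} (hw : G.dist u w = 2) {a a' : V}
    (ha : G.Adj u a) (haw : G.Adj a w) (ha' : G.Adj u a') (ha'w : G.Adj a' w) : a = a' := by
  by_contra hne
  have huw : u ≠ w := by rintro rfl; simp [SimpleGraph.dist_self] at hw
  exact no_square hg huw hne ha haw ha'w.symm ha'.symm

lemma walk_decomp5 {u : V} (p : G.Walk u u) (hlen : p.length = 5) :
    ∃ (a x y b : V) (h1 : G.Adj u a) (h2 : G.Adj a x) (h3 : G.Adj x y) (h4 : G.Adj y b)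
      (h5 : G.Adj b u),
      p = Walk.cons h1 (Walk.cons h2 (Walk.cons h3 (Walk.cons h4 (Walk.cons h5 Walk.nil)))) := by
  cases p with
  | nil => simp at hlen
  | cons h1 q =>
  cases q with
  | nil => simp at hlen
  | cons h2 q =>
  cases q with
  | nil => simp at hlen
  | cons h3 q =>
  cases q with
  | nil => simp at hlen
  | cons h4 q =>
  cases q with
  | nil => simp at hlen
  | cons h5 q =>
    have hq : q.length = 0 := by simp only [Walk.length_cons] at hlen; omega
    have := Walk.eq_of_length_eq_zero hq
    subst this
    cases q with
    | nil => exact ⟨_, _, _, _, h1, h2, h3, h4, h5, rfl⟩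
    | cons h r => simp [Walk.length_cons] at hq

/-- generic dependent-pairs counting -/
lemma card_dep_pairs {α β : Type*} [DecidableEq α] [DecidableEq β]
    (s : Finset α) (f : α → Finset β) :
    (s.biUnion fun a => (f a).image (Prod.mk a)).card = ∑ a ∈ s, (f a).card := by
  rw [Finset.card_biUnion]
  · exact Finset.sum_congr rfl fun a _ =>
      Finset.card_image_of_injective _ (fun b b' h => by simpa using h)
  · intro a _ a' _ hne
    simp only [Finset.disjoint_left, Finset.mem_image]
    rintro ⟨x, y⟩ ⟨b, _, hb⟩ ⟨b', _, hb'⟩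
    exact hne ((Prod.mk.injEq .. |>.mp hb).1.trans (Prod.mk.injEq .. |>.mp hb').1.symm)

lemma mem_dep_pairs {α β : Type*} [DecidableEq α] [DecidableEq β]
    (s : Finset α) (f : α → Finset β) (p : α × β) :
    p ∈ (s.biUnion fun a => (f a).image (Prod.mk a)) ↔ p.1 ∈ s ∧ p.2 ∈ f p.1 := by
  obtain ⟨x, y⟩ := p
  simp only [Finset.mem_biUnion, Finset.mem_image]
  constructor
  · rintro ⟨a, ha, b, hb, heq⟩
    obtain ⟨rfl, rfl⟩ := Prod.mk.injEq .. |>.mp heq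
    exact ⟨ha, hb⟩
  · rintro ⟨hx, hy⟩
    exact ⟨x, hx, y, hy, rfl⟩

lemma not_adj_of_dist_two {u x : V} (hx : G.dist u x = 2) : ¬ G.Adj u x := fun h => by
  have := SimpleGraph.dist_eq_one_iff_adj.mpr h; omega

lemma ne_of_dist_two {u x : V} (hx : G.dist u x = 2) : x ≠ u := by
  rintro rfl; simp [SimpleGraph.dist_self] at hx

lemma cycle5_struct (hg : 5 ≤ G.egirth) {u : V} (p : G.Walk u u) (hcy : p.IsCycle)
    (hlen : p.length = 5) :
    ∃ (a x y b : V) (h1 : G.Adj u a) (h2 : G.Adj a x) (h3 : G.Adj x y) (h4 : G.Adj y b)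
      (h5 : G.Adj b u),
      p = Walk.cons h1 (Walk.cons h2 (Walk.cons h3 (Walk.cons h4 (Walk.cons h5 Walk.nil)))) ∧
      p.getVert 2 = x ∧ p.getVert 3 = y ∧ G.dist u x = 2 ∧ G.dist u y = 2 := by
  obtain ⟨a, x, y, b, h1, h2, h3, h4, h5, rfl⟩ := walk_decomp5 p hlen
  have hnd := (Walk.isCycle_def _).mp hcy |>.2.2
  simp only [Walk.support_cons, Walk.support_nil, List.tail_cons] at hnd
  have hxu : x ≠ u := by rintro rfl; simp at hnd
  have hyu : y ≠ u := by rintro rfl; simp at hnd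
  refine ⟨a, x, y, b, h1, h2, h3, h4, h5, rfl, rfl, rfl, ?_, ?_⟩
  · exact mem_B_iff.mpr ⟨hxu, fun h => no_triangle hg h1 h2 h.symm, a, h1, h2⟩
  · exact mem_B_iff.mpr ⟨hyu, fun h => no_triangle hg h5.symm h4.symm h.symm, b, h5.symm, h4.symm⟩

lemma pair_to_cycle (hg : 5 ≤ G.egirth) {u x y : V} (hx : G.dist u x = 2)
    (hy : G.dist u y = 2) (hxy : G.Adj x y) :
    ∃ p : G.Walk u u, p.IsCycle ∧ p.length = 5 ∧ p.getVert 2 = x ∧ p.getVert 3 = y := by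
  have hxu : x ≠ u := ne_of_dist_two hx
  have hyu : y ≠ u := ne_of_dist_two hy
  have hnux : ¬ G.Adj u x := not_adj_of_dist_two hx
  have hnuy : ¬ G.Adj u y := not_adj_of_dist_two hy
  obtain ⟨-, -, a, h1, h2⟩ := mem_B_iff.mp hx
  obtain ⟨-, -, b, hb1, hb2⟩ := mem_B_iff.mp hy
  have hab : a ≠ b := by rintro rfl; exact no_triangle hg h2 hxy hb2.symm
  have hax : a ≠ x := h2.ne
  have hay : a ≠ y := fun h => hnuy (h ▸ h1)
  have hau : a ≠ u := h1.ne'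
  have hxb : x ≠ b := fun h => hnux (h ▸ hb1)
  have hyb : y ≠ b := hb2.ne'
  have hbu : b ≠ u := hb1.ne'
  refine ⟨Walk.cons h1 (Walk.cons h2 (Walk.cons hxy (Walk.cons hb2.symm
    (Walk.cons hb1.symm Walk.nil)))), ?_, by simp, rfl, rfl⟩
  rw [Walk.cons_isCycle_iff]
  constructor
  · rw [Walk.isPath_def]
    simp [hab, hax, hay, hau, hxb, hyb, hbu, hxy.ne, hxu, hyu,
      hab.symm, hax.symm, hay.symm, hau.symm, hxb.symm, hyb.symm, hbu.symm, hxy.ne', hxu.symm,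
      hyu.symm]
  · simp only [Walk.edges_cons, Walk.edges_nil, List.mem_cons, List.not_mem_nil, or_false]
    push_neg
    refine ⟨?_, ?_, ?_, ?_⟩ <;>
      simp [Ne, Sym2.eq_iff, hab, hax, hay, hau, hxb, hyb, hbu, hxy.ne, hxu, hyu,
        hab.symm, hax.symm, hay.symm, hau.symm, hxb.symm, hyb.symm, hbu.symm, hxy.ne',
        hxu.symm, hyu.symm]

end VGRaux

/-- If `G` is a `vgr(n, k, 5, k(k-1)²/2 − ε)`-graph with `k ≥ 3` and
`0 < ε ≤ (k-1)/2`, then for every vertex `u`,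
`|E(N₂(u), V∖(N(u) ∪ N₂(u)))| = 2ε`. -/
theorem vgr_outer_edges {V : Type*} [Fintype V] (G : SimpleGraph V) [DecidableRel G.Adj]
    (k ε n : ℕ) (hk : 3 ≤ k) (hε : 0 < ε) (hεk : 2 * ε ≤ k - 1)
    (hG : IsVGR G n k 5 (k * (k - 1) ^ 2 / 2 - ε)) :
    ∀ u : V, (edgesBetween G (distTwoSet G u)
      ((G.neighborSet u ∪ distTwoSet G u)ᶜ)).ncard = 2 * ε := by
  intro u
  classical
  obtain ⟨hcard, hdeg, hgirth5, hcyc⟩ := hG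
  set lam := k * (k - 1) ^ 2 / 2 - ε with hlam
  -- girth consequence
  have hg : 5 ≤ G.egirth := by
    have h5 : G.girth = 5 := by exact_mod_cast hgirth5
    have hne : G.egirth ≠ ⊤ := by
      intro ht
      have : G.girth = 0 := by simp [SimpleGraph.girth, ht]
      omega
    have h5' : G.egirth = 5 := by
      rw [SimpleGraph.girth] at h5
      lift G.egirth to ℕ using hne with m hm
      simp only [ENat.toNat_coe] at h5
      exact_mod_cast h5
    rw [h5']
  -- the three finsets
  set A : Finset V := G.neighborFinset u with hA
  set Bf : Finset V := Finset.univ.filter (fun w => G.dist u w = 2) with hBf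
  have hmemB : ∀ w, w ∈ Bf ↔ G.dist u w = 2 := by intro w; simp [hBf]
  set NB : V → Finset V :=
    fun w => (G.neighborFinset w).filter (fun z => ¬ G.Adj u z ∧ G.dist u z = 2) with hNB
  set NC : V → Finset V :=
    fun w => (G.neighborFinset w).filter (fun z => ¬ G.Adj u z ∧ G.dist u z ≠ 2) with hNC
  set NA : V → Finset V :=
    fun w => (G.neighborFinset w).filter (fun z => G.Adj u z) with hNA
  -- degree partition
  have hkey : ∀ w : V, G.degree w = (NA w).card + ((NB w).card + (NC w).card) := by
    intro w
    have e1 := Finset.card_filter_add_card_filter_not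
      (s := G.neighborFinset w) (p := fun z => G.Adj u z)
    have e2 := Finset.card_filter_add_card_filter_not
      (s := (G.neighborFinset w).filter (fun z => ¬ G.Adj u z)) (p := fun z => G.dist u z = 2)
    rw [Finset.filter_filter, Finset.filter_filter] at e2
    rw [SimpleGraph.degree, ← e1, ← e2, hNA, hNB, hNC]
  -- |B| = k(k-1)
  have hBU : Bf = A.biUnion (fun a => (G.neighborFinset a).erase u) := by
    ext w
    simp only [hmemB, Finset.mem_biUnion, Finset.mem_erase, mem_neighborFinset, hA]
    constructor
    · intro hw
      obtain ⟨hne, hnadj, a, h1, h2⟩ := VGRaux.mem_B_iff.mp hw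
      exact ⟨a, h1, hne, h2⟩
    · rintro ⟨a, h1, hne, h2⟩
      exact VGRaux.mem_B_iff.mpr
        ⟨hne, fun hadj => VGRaux.no_triangle hg h1 h2 hadj.symm, a, h1, h2⟩
  have hBcard : Bf.card = k * (k - 1) := by
    rw [hBU, Finset.card_biUnion]
    · have : ∀ a ∈ A, ((G.neighborFinset a).erase u).card = k - 1 := by
        intro a ha
        rw [Finset.card_erase_of_mem, G.card_neighborFinset_eq_degree, hdeg]
        rw [mem_neighborFinset]
        exact ((mem_neighborFinset _ _ _).mp (hA ▸ ha)).symm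
      rw [Finset.sum_congr rfl this, Finset.sum_const, smul_eq_mul,
        (by rw [hA, G.card_neighborFinset_eq_degree, hdeg] : A.card = k)]
    · intro a ha a' ha' hne
      simp only [Finset.disjoint_left, Finset.mem_erase, mem_neighborFinset]
      rintro w ⟨hwu, haw⟩ ⟨-, ha'w⟩
      have hua : G.Adj u a := (mem_neighborFinset _ _ _).mp (hA ▸ ha)
      have hua' : G.Adj u a' := (mem_neighborFinset _ _ _).mp (hA ▸ ha')
      exact VGRaux.no_square hg (Ne.symm hwu) hne hua haw ha'w.symm hua'.symm
  -- each w in B has exactly one neighbor in A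
  have hNAcard : ∀ w ∈ Bf, (NA w).card = 1 := by
    intro w hw
    rw [hmemB] at hw
    obtain ⟨hne, hnadj, a, h1, h2⟩ := VGRaux.mem_B_iff.mp hw
    rw [Finset.card_eq_one]
    refine ⟨a, Finset.eq_singleton_iff_unique_mem.mpr ⟨?_, ?_⟩⟩
    · rw [hNA]; simp only [Finset.mem_filter, mem_neighborFinset]
      exact ⟨h2.symm, h1⟩
    · intro z hz
      rw [hNA] at hz
      simp only [Finset.mem_filter, mem_neighborFinset] at hz
      exact VGRaux.unique_nbr hg hw hz.2 hz.1.symm h1 h2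
  -- pair finsets
  set Tf : Finset (V × V) := Bf.biUnion (fun w => (NB w).image (Prod.mk w)) with hTf
  set Xf : Finset (V × V) := Bf.biUnion (fun w => (NC w).image (Prod.mk w)) with hXf
  -- the master count
  have hL : ∑ w ∈ Bf, G.degree w = k * (k - 1) * k := by
    rw [Finset.sum_congr rfl (fun w _ => hdeg w), Finset.sum_const, smul_eq_mul, hBcard]
  have hA1 : ∑ w ∈ Bf, (NA w).card = k * (k - 1) := by
    rw [Finset.sum_congr rfl hNAcard, Finset.sum_const, smul_eq_mul, mul_one, hBcard]
  have hmaster : k * (k - 1) * k = k * (k - 1) + (Tf.card + Xf.card) := by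
    have h1' : ∑ w ∈ Bf, G.degree w = ∑ w ∈ Bf, ((NA w).card + ((NB w).card + (NC w).card)) :=
      Finset.sum_congr rfl fun w _ => hkey w
    rw [Finset.sum_add_distrib, Finset.sum_add_distrib] at h1'
    rw [← hL, h1', hA1, ← VGRaux.card_dep_pairs Bf NB, ← VGRaux.card_dep_pairs Bf NC,
      ← hTf, ← hXf]
  -- Tf.card = 2 * lam via cycles
  have hTcard : Tf.card = 2 * lam := by
    have hS := hcyc u
    rw [doubleCycleCountAt] at hS
    set S : Set (G.Walk u u) := {p | p.IsCycle ∧ p.length = 5} with hs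
    have himg : (fun p : G.Walk u u => (p.getVert 2, p.getVert 3)) '' S = ↑Tf := by
      ext q
      constructor
      · rintro ⟨p, ⟨pcyc, plen⟩, rfl⟩
        obtain ⟨a, x, y, b, h1, h2, h3, h4, h5, hpe, hg2, hg3, hdx, hdy⟩ :=
          VGRaux.cycle5_struct hg p pcyc plen
        rw [Finset.mem_coe, hTf, VGRaux.mem_dep_pairs]
        dsimp only
        rw [hg2, hg3]
        simp only [hmemB, hNB, Finset.mem_filter, mem_neighborFinset]
        exact ⟨hdx, h3, VGRaux.not_adj_of_dist_two hdy, hdy⟩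
      · intro hq
        rw [Finset.mem_coe, hTf, VGRaux.mem_dep_pairs] at hq
        obtain ⟨hq1, hq2⟩ := hq
        rw [hmemB] at hq1
        rw [hNB] at hq2
        simp only [Finset.mem_filter, mem_neighborFinset] at hq2
        obtain ⟨p, pcyc, plen, hg2, hg3⟩ := VGRaux.pair_to_cycle hg hq1 hq2.2.2 hq2.1
        exact ⟨p, ⟨pcyc, plen⟩, by dsimp only; rw [hg2, hg3]⟩
    have hinj : Set.InjOn (fun p : G.Walk u u => (p.getVert 2, p.getVert 3)) S := by
      rintro p ⟨pcyc, plen⟩ p' ⟨pcyc', plen'⟩ heq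
      obtain ⟨a, x, y, b, h1, h2, h3, h4, h5, hpe, hg2, hg3, hdx, hdy⟩ :=
        VGRaux.cycle5_struct hg p pcyc plen
      obtain ⟨a', x', y', b', h1', h2', h3', h4', h5', hpe', hg2', hg3', hdx', hdy'⟩ :=
        VGRaux.cycle5_struct hg p' pcyc' plen'
      simp only [Prod.mk.injEq, hg2, hg3, hg2', hg3'] at heq
      obtain ⟨rfl, rfl⟩ := heq
      have ha : a = a' := VGRaux.unique_nbr hg hdx h1 h2 h1' h2'
      have hb : b = b' := VGRaux.unique_nbr hg hdy h5.symm h4.symm h5'.symm h4'.symm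
      subst ha; subst hb
      rw [hpe, hpe']
    rw [← Set.ncard_coe_finset, ← himg, Set.ncard_image_of_injOn hinj]
    exact hS
  -- Xf.card equals the goal cardinality
  have hXcard : (edgesBetween G (distTwoSet G u)
      ((G.neighborSet u ∪ distTwoSet G u)ᶜ)).ncard = Xf.card := by
    have himg : (fun q : V × V => s(q.1, q.2)) '' ↑Xf =
        edgesBetween G (distTwoSet G u) ((G.neighborSet u ∪ distTwoSet G u)ᶜ) := by
      ext e
      constructor
      · rintro ⟨⟨w, z⟩, hq, rfl⟩
        rw [Finset.mem_coe, hXf, VGRaux.mem_dep_pairs] at hq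
        obtain ⟨hq1, hq2⟩ := hq
        rw [hmemB] at hq1
        rw [hNC] at hq2
        simp only [Finset.mem_filter, mem_neighborFinset] at hq2
        refine ⟨(SimpleGraph.mem_edgeSet _).mpr hq2.1, w, hq1, z, ?_, rfl⟩
        simp only [Set.mem_compl_iff, Set.mem_union, SimpleGraph.mem_neighborSet, distTwoSet,
          Set.mem_setOf_eq]
        push_neg
        exact ⟨hq2.2.1, hq2.2.2⟩
      · rintro ⟨hee, w, hw, z, hz, rfl⟩
        simp only [Set.mem_compl_iff, Set.mem_union, SimpleGraph.mem_neighborSet, distTwoSet,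
          Set.mem_setOf_eq] at hz
        push_neg at hz
        refine ⟨(w, z), ?_, rfl⟩
        rw [Finset.mem_coe, hXf, VGRaux.mem_dep_pairs]
        rw [hmemB, hNC]
        simp only [Finset.mem_filter, mem_neighborFinset]
        exact ⟨hw, (SimpleGraph.mem_edgeSet _).mp hee, hz.1, hz.2⟩
    have hinj : Set.InjOn (fun q : V × V => s(q.1, q.2)) ↑Xf := by
      rintro ⟨w, z⟩ hq ⟨w', z'⟩ hq' heq
      rw [Finset.mem_coe, hXf, VGRaux.mem_dep_pairs] at hq hq'
      simp only [Sym2.eq_iff] at heq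
      rcases heq with ⟨rfl, rfl⟩ | ⟨rfl, rfl⟩
      · rfl
      · exfalso
        rw [hmemB] at hq
        rw [hNC] at hq'
        simp only [Finset.mem_filter, mem_neighborFinset] at hq'
        exact hq'.2.2.2 hq.1
    rw [← himg, Set.ncard_image_of_injOn hinj, Set.ncard_coe_finset]
  -- arithmetic finish
  rw [hXcard]
  have hdvd : 2 ∣ k * (k - 1) ^ 2 := by
    rcases Nat.even_or_odd k with h | h
    · exact Dvd.dvd.mul_right h.two_dvd _
    · have : Even (k - 1) := Nat.Odd.sub_odd h odd_one
      exact Dvd.dvd.mul_left (dvd_pow this.two_dvd two_ne_zero) _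
  have h2m : 2 * (k * (k - 1) ^ 2 / 2) = k * (k - 1) ^ 2 := Nat.mul_div_cancel' hdvd
  have hk1 : k - 1 ≤ k * (k - 1) ^ 2 := by
    obtain ⟨j, rfl⟩ : ∃ j, k = j + 3 := ⟨k - 3, by omega⟩
    have h' : j + 3 - 1 = j + 2 := by omega
    rw [h']
    nlinarith
  have hεm : ε ≤ k * (k - 1) ^ 2 / 2 := by omega
  have h2lam : 2 * lam + 2 * ε = k * (k - 1) ^ 2 := by rw [hlam]; omega
  have e1 : k * (k - 1) * k = k * (k - 1) + k * (k - 1) ^ 2 := by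
    obtain ⟨j, rfl⟩ : ∃ j, k = j + 1 := ⟨k - 1, by omega⟩
    simp only [Nat.add_sub_cancel]
    ring
  have E2 : k * (k - 1) * k = k * (k - 1) + (2 * lam + Xf.card) := by
    rw [← hTcard]; exact hmaster
  have E4 : 2 * lam + Xf.card = k * (k - 1) ^ 2 := Nat.add_left_cancel (E2.symm.trans e1)
  omega
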